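/- Let 𝒴 ⊂ ℝ be a finite set, let 𝒜, 𝒢₁, ℬ₁, 𝒢₂ be finite types, let p be a strictly positive probability mass function on 𝒴 × 𝒜 × 𝒢₁ × ℬ₁ × 𝒢₂, and fix a ∈ 𝒜. If G₁ ⊥ (A, G₂) | B₁ under p, then Var_p( ψ_a^{B₁,G₂}(Y,A,B₁,G₂) ) = Var_p( ψ_a^{(G₁,B₁),G₂}(Y,A,G₁,B₁,G₂) ) + Var_p( ψ_a^{B₁,G₂}(Y,A,B₁,G₂) − ψ_a^{(G₁,B₁),G₂}(Y,A,G₁,B₁,G₂) ); in particular, Var_p( ψ_a^{B₁,G₂} ) ≥ Var_p( ψ_a^{(G₁,B₁),G₂} ). -/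

import Mathlib

open Finset

noncomputable section

variable {Y : Finset ℝ} {A G₁ B₁ G₂ : Type}
variable [Fintype A] [Fintype G₁] [Fintype B₁] [Fintype G₂] [DecidableEq A]

/-- Marginal `p(g₁)`. -/
def pG1 (p : Y × A × G₁ × B₁ × G₂ → ℝ) (g₁ : G₁) : ℝ :=
  ∑ y : Y, ∑ a : A, ∑ b₁ : B₁, ∑ g₂ : G₂, p (y, a, g₁, b₁, g₂)

/-- Marginal `p(b₁)`. -/
def pB1 (p : Y × A × G₁ × B₁ × G₂ → ℝ) (b₁ : B₁) : ℝ :=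
  ∑ y : Y, ∑ a : A, ∑ g₁ : G₁, ∑ g₂ : G₂, p (y, a, g₁, b₁, g₂)

/-- Marginal `p(g₂)`. -/
def pG2 (p : Y × A × G₁ × B₁ × G₂ → ℝ) (g₂ : G₂) : ℝ :=
  ∑ y : Y, ∑ a : A, ∑ g₁ : G₁, ∑ b₁ : B₁, p (y, a, g₁, b₁, g₂)

/-- Marginal `p(g₁, b₁)`. -/
def pG1B1 (p : Y × A × G₁ × B₁ × G₂ → ℝ) (g₁ : G₁) (b₁ : B₁) : ℝ :=
  ∑ y : Y, ∑ a : A, ∑ g₂ : G₂, p (y, a, g₁, b₁, g₂)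

/-- Marginal `p(a, b₁, g₂)`. -/
def pAB1G2 (p : Y × A × G₁ × B₁ × G₂ → ℝ) (a : A) (b₁ : B₁) (g₂ : G₂) : ℝ :=
  ∑ y : Y, ∑ g₁ : G₁, p (y, a, g₁, b₁, g₂)

/-- Marginal `p(a, g₁, b₁, g₂)`. -/
def pAG1B1G2 (p : Y × A × G₁ × B₁ × G₂ → ℝ) (a : A) (g₁ : G₁) (b₁ : B₁) (g₂ : G₂) : ℝ :=
  ∑ y : Y, p (y, a, g₁, b₁, g₂)

/-- Marginal `p(a, g₁, g₂)`. -/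
def pAG1G2 (p : Y × A × G₁ × B₁ × G₂ → ℝ) (a : A) (g₁ : G₁) (g₂ : G₂) : ℝ :=
  ∑ y : Y, ∑ b₁ : B₁, p (y, a, g₁, b₁, g₂)

/-- Outcome regression `m_B(b₁,g₂) = ∑_y y·p(y | a, b₁, g₂)` for the
adjustment set `(B₁, G₂)`. -/
def mB (p : Y × A × G₁ × B₁ × G₂ → ℝ) (a : A) (b₁ : B₁) (g₂ : G₂) : ℝ :=
  ∑ y : Y, (y : ℝ) * ((∑ g₁ : G₁, p (y, a, g₁, b₁, g₂)) / pAB1G2 p a b₁ g₂)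

/-- Outcome regression `m_{GB}(g₁,b₁,g₂) = ∑_y y·p(y | a, g₁, b₁, g₂)` for
the adjustment set `((G₁, B₁), G₂)`. -/
def mGB (p : Y × A × G₁ × B₁ × G₂ → ℝ) (a : A) (g₁ : G₁) (b₁ : B₁) (g₂ : G₂) : ℝ :=
  ∑ y : Y, (y : ℝ) * (p (y, a, g₁, b₁, g₂) / pAG1B1G2 p a g₁ b₁ g₂)

/-- Outcome regression `m_{GG}(g₁,g₂) = ∑_y y·p(y | a, g₁, g₂)` for the
adjustment set `(G₁, G₂)`. -/
def mGG (p : Y × A × G₁ × B₁ × G₂ → ℝ) (a : A) (g₁ : G₁) (g₂ : G₂) : ℝ :=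
  ∑ y : Y, (y : ℝ) * ((∑ b₁ : B₁, p (y, a, g₁, b₁, g₂)) / pAG1G2 p a g₁ g₂)

/-- Target parameter for the adjustment set `(B₁, G₂)`. -/
def TB (p : Y × A × G₁ × B₁ × G₂ → ℝ) (a : A) : ℝ :=
  ∑ b₁ : B₁, pB1 p b₁ * ∑ g₂ : G₂, pG2 p g₂ * mB p a b₁ g₂

/-- Target parameter for the adjustment set `((G₁, B₁), G₂)`. -/
def TGB (p : Y × A × G₁ × B₁ × G₂ → ℝ) (a : A) : ℝ :=
  ∑ g₁ : G₁, ∑ b₁ : B₁, pG1B1 p g₁ b₁ * ∑ g₂ : G₂, pG2 p g₂ * mGB p a g₁ b₁ g₂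

/-- Target parameter for the adjustment set `(G₁, G₂)`. -/
def TGG (p : Y × A × G₁ × B₁ × G₂ → ℝ) (a : A) : ℝ :=
  ∑ g₁ : G₁, pG1 p g₁ * ∑ g₂ : G₂, pG2 p g₂ * mGG p a g₁ g₂

/-- Influence function `ψ_a^{B₁,G₂}` for the adjustment set `(B₁, G₂)`. -/
def psiB (p : Y × A × G₁ × B₁ × G₂ → ℝ) (a : A)
    (y : Y) (a' : A) (b₁ : B₁) (g₂ : G₂) : ℝ :=
  (if a' = a then (1 : ℝ) else 0) * (pB1 p b₁ * pG2 p g₂ / pAB1G2 p a b₁ g₂) *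
      ((y : ℝ) - mB p a b₁ g₂)
    + (∑ g₂' : G₂, pG2 p g₂' * mB p a b₁ g₂')
    + (∑ b₁' : B₁, pB1 p b₁' * mB p a b₁' g₂)
    - 2 * TB p a

/-- Influence function `ψ_a^{(G₁,B₁),G₂}` for the adjustment set `((G₁, B₁), G₂)`. -/
def psiGB (p : Y × A × G₁ × B₁ × G₂ → ℝ) (a : A)
    (y : Y) (a' : A) (g₁ : G₁) (b₁ : B₁) (g₂ : G₂) : ℝ :=
  (if a' = a then (1 : ℝ) else 0) *
      (pG1B1 p g₁ b₁ * pG2 p g₂ / pAG1B1G2 p a g₁ b₁ g₂) *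
      ((y : ℝ) - mGB p a g₁ b₁ g₂)
    + (∑ g₂' : G₂, pG2 p g₂' * mGB p a g₁ b₁ g₂')
    + (∑ g₁' : G₁, ∑ b₁' : B₁, pG1B1 p g₁' b₁' * mGB p a g₁' b₁' g₂)
    - 2 * TGB p a

/-- Influence function `ψ_a^{G₁,G₂}` for the adjustment set `(G₁, G₂)`. -/
def psiGG (p : Y × A × G₁ × B₁ × G₂ → ℝ) (a : A)
    (y : Y) (a' : A) (g₁ : G₁) (g₂ : G₂) : ℝ :=
  (if a' = a then (1 : ℝ) else 0) * (pG1 p g₁ * pG2 p g₂ / pAG1G2 p a g₁ g₂) *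
      ((y : ℝ) - mGG p a g₁ g₂)
    + (∑ g₂' : G₂, pG2 p g₂' * mGG p a g₁ g₂')
    + (∑ g₁' : G₁, pG1 p g₁' * mGG p a g₁' g₂)
    - 2 * TGG p a

/-- Conditional independence `G₁ ⊥ (A, G₂) | B₁` under `p`. -/
def CI_G1_AG2_B1 (p : Y × A × G₁ × B₁ × G₂ → ℝ) : Prop :=
  ∀ (g₁ : G₁) (a : A) (g₂ : G₂) (b₁ : B₁),
    (∑ y : Y, p (y, a, g₁, b₁, g₂)) / pB1 p b₁ =
      (pG1B1 p g₁ b₁ / pB1 p b₁) * (pAB1G2 p a b₁ g₂ / pB1 p b₁)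

/-- Conditional independence `Y ⊥ B₁ | (A, G₁, G₂)` under `p`. -/
def CI_Y_B1_AG1G2 (p : Y × A × G₁ × B₁ × G₂ → ℝ) : Prop :=
  ∀ (y : Y) (a : A) (g₁ : G₁) (b₁ : B₁) (g₂ : G₂),
    p (y, a, g₁, b₁, g₂) / pAG1G2 p a g₁ g₂ =
      ((∑ b₁' : B₁, p (y, a, g₁, b₁', g₂)) / pAG1G2 p a g₁ g₂) *
        (pAG1B1G2 p a g₁ b₁ g₂ / pAG1G2 p a g₁ g₂)

/-- Variance of a real function of the observation under `p`. -/
def VarP (p : Y × A × G₁ × B₁ × G₂ → ℝ) (f : Y × A × G₁ × B₁ × G₂ → ℝ) : ℝ :=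
  (∑ o : Y × A × G₁ × B₁ × G₂, p o * f o ^ 2) -
    (∑ o : Y × A × G₁ × B₁ × G₂, p o * f o) ^ 2

set_option linter.unusedSectionVars false

section SumHelpers
variable {α β γ δ ε : Type*} [Fintype α] [Fintype β] [Fintype γ] [Fintype δ] [Fintype ε]

lemma sum_rot3 (f : α → β → γ → ℝ) :
    ∑ a, ∑ b, ∑ c, f a b c = ∑ b, ∑ c, ∑ a, f a b c := by
  rw [Finset.sum_comm]
  exact Finset.sum_congr rfl fun b _ => Finset.sum_comm

lemma sum_rot4 (f : α → β → γ → δ → ℝ) :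
    ∑ a, ∑ b, ∑ c, ∑ d, f a b c d = ∑ b, ∑ c, ∑ d, ∑ a, f a b c d := by
  rw [Finset.sum_comm]
  exact Finset.sum_congr rfl fun b _ => sum_rot3 _

lemma sum_rot5 (f : α → β → γ → δ → ε → ℝ) :
    ∑ a, ∑ b, ∑ c, ∑ d, ∑ e, f a b c d e = ∑ b, ∑ c, ∑ d, ∑ e, ∑ a, f a b c d e := by
  rw [Finset.sum_comm]
  exact Finset.sum_congr rfl fun b _ => sum_rot4 _

end SumHelpers

section VarHelpers
variable {ι : Type*} [Fintype ι]

lemma var_nonneg_gen (p f : ι → ℝ) (hp : ∀ i, 0 ≤ p i) (h1 : ∑ i, p i = 1) :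
    0 ≤ (∑ i, p i * f i ^ 2) - (∑ i, p i * f i) ^ 2 := by
  set μ := ∑ i, p i * f i with hμ
  have h2 : ∑ i, p i * (f i - μ) ^ 2 = (∑ i, p i * f i ^ 2) - μ ^ 2 := by
    have e : ∀ i : ι, p i * (f i - μ) ^ 2
        = p i * f i ^ 2 - 2 * μ * (p i * f i) + μ ^ 2 * p i := fun i => by ring
    rw [Finset.sum_congr rfl fun i _ => e i, Finset.sum_add_distrib, Finset.sum_sub_distrib,
      ← Finset.mul_sum, ← Finset.mul_sum, ← hμ, h1]
    ring
  have h3 : 0 ≤ ∑ i, p i * (f i - μ) ^ 2 :=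
    Finset.sum_nonneg fun i _ => mul_nonneg (hp i) (sq_nonneg _)
  linarith [h2 ▸ h3]

lemma var_add_gen (p g h : ι → ℝ)
    (horth : ∑ i, p i * (g i * h i) = (∑ i, p i * g i) * (∑ i, p i * h i)) :
    (∑ i, p i * (g i + h i) ^ 2) - (∑ i, p i * (g i + h i)) ^ 2
      = ((∑ i, p i * g i ^ 2) - (∑ i, p i * g i) ^ 2)
        + ((∑ i, p i * h i ^ 2) - (∑ i, p i * h i) ^ 2) := by
  have e1 : ∑ i, p i * (g i + h i) ^ 2
      = (∑ i, p i * g i ^ 2) + (∑ i, p i * h i ^ 2) + 2 * ∑ i, p i * (g i * h i) := by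
    rw [Finset.sum_congr rfl (fun i _ =>
      show p i * (g i + h i) ^ 2
        = p i * g i ^ 2 + p i * h i ^ 2 + 2 * (p i * (g i * h i)) by ring)]
    rw [Finset.sum_add_distrib, Finset.sum_add_distrib, ← Finset.mul_sum]
  have e2 : ∑ i, p i * (g i + h i) = (∑ i, p i * g i) + (∑ i, p i * h i) := by
    rw [Finset.sum_congr rfl (fun i _ =>
      show p i * (g i + h i) = p i * g i + p i * h i by ring), Finset.sum_add_distrib]
  rw [e1, e2, horth]; ring

end VarHelpers
/-! ### Auxiliary machinery -/

section AuxDefs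
variable (p : Y × A × G₁ × B₁ × G₂ → ℝ)

/-- Joint marginal `p(g₁,b₁,g₂)`. -/
def pG1B1G2 (g₁ : G₁) (b₁ : B₁) (g₂ : G₂) : ℝ := ∑ a' : A, pAG1B1G2 p a' g₁ b₁ g₂

/-- The common IPW weight. -/
def wgt (a : A) (b₁ : B₁) (g₂ : G₂) : ℝ := pB1 p b₁ * pG2 p g₂ / pAB1G2 p a b₁ g₂

/-- Difference of the two outcome regressions. -/
def dd (a : A) (g₁ : G₁) (b₁ : B₁) (g₂ : G₂) : ℝ := mGB p a g₁ b₁ g₂ - mB p a b₁ g₂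

/-- `G₂`-average of `dd`. -/
def DD (a : A) (g₁ : G₁) (b₁ : B₁) : ℝ := ∑ g₂ : G₂, pG2 p g₂ * dd p a g₁ b₁ g₂

end AuxDefs

section AuxLemmas
variable (p : Y × A × G₁ × B₁ × G₂ → ℝ)

lemma marg_G1B1 (b₁ : B₁) : ∑ g₁ : G₁, pG1B1 p g₁ b₁ = pB1 p b₁ := by
  simp only [pG1B1, pB1]
  rw [sum_rot4]
  exact Finset.sum_congr rfl fun y _ => Finset.sum_congr rfl fun a _ => Finset.sum_comm

lemma marg_AG2 (g₁ : G₁) (b₁ : B₁) :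
    ∑ a' : A, ∑ g₂ : G₂, pAG1B1G2 p a' g₁ b₁ g₂ = pG1B1 p g₁ b₁ := by
  simp only [pAG1B1G2, pG1B1]
  rw [sum_rot3, sum_rot3]

lemma marg_G2_pG1B1G2 (g₁ : G₁) (b₁ : B₁) :
    ∑ g₂ : G₂, pG1B1G2 p g₁ b₁ g₂ = pG1B1 p g₁ b₁ := by
  rw [← marg_AG2 p g₁ b₁]; exact Finset.sum_comm

lemma marg_G1_pAG1B1G2 (a' : A) (b₁ : B₁) (g₂ : G₂) :
    ∑ g₁ : G₁, pAG1B1G2 p a' g₁ b₁ g₂ = pAB1G2 p a' b₁ g₂ := by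
  simp only [pAG1B1G2, pAB1G2]
  exact Finset.sum_comm

variable (hpos : ∀ o, 0 < p o)
include hpos

lemma pAG1B1G2_pos [Nonempty Y] (a' : A) (g₁ : G₁) (b₁ : B₁) (g₂ : G₂) :
    0 < pAG1B1G2 p a' g₁ b₁ g₂ :=
  Finset.sum_pos (fun _ _ => hpos _) Finset.univ_nonempty

lemma pAB1G2_pos [Nonempty Y] [Nonempty G₁] (a' : A) (b₁ : B₁) (g₂ : G₂) :
    0 < pAB1G2 p a' b₁ g₂ :=
  Finset.sum_pos (fun _ _ => Finset.sum_pos (fun _ _ => hpos _) Finset.univ_nonempty)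
    Finset.univ_nonempty

lemma pG1B1_pos [Nonempty Y] [Nonempty A] [Nonempty G₂] (g₁ : G₁) (b₁ : B₁) :
    0 < pG1B1 p g₁ b₁ :=
  Finset.sum_pos (fun _ _ => Finset.sum_pos (fun _ _ =>
    Finset.sum_pos (fun _ _ => hpos _) Finset.univ_nonempty) Finset.univ_nonempty)
    Finset.univ_nonempty

lemma pB1_pos [Nonempty Y] [Nonempty A] [Nonempty G₁] [Nonempty G₂] (b₁ : B₁) :
    0 < pB1 p b₁ :=
  Finset.sum_pos (fun _ _ => Finset.sum_pos (fun _ _ => Finset.sum_pos (fun _ _ =>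
    Finset.sum_pos (fun _ _ => hpos _) Finset.univ_nonempty) Finset.univ_nonempty)
    Finset.univ_nonempty) Finset.univ_nonempty

lemma pG2_pos [Nonempty Y] [Nonempty A] [Nonempty G₁] [Nonempty B₁] (g₂ : G₂) :
    0 < pG2 p g₂ :=
  Finset.sum_pos (fun _ _ => Finset.sum_pos (fun _ _ => Finset.sum_pos (fun _ _ =>
    Finset.sum_pos (fun _ _ => hpos _) Finset.univ_nonempty) Finset.univ_nonempty)
    Finset.univ_nonempty) Finset.univ_nonempty

/-- The key consequence of conditional independence:
`p(a',g₁,b₁,g₂) · p(b₁) = p(g₁,b₁) · p(a',b₁,g₂)`. -/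
lemma key_fact [Nonempty Y] [Nonempty A] [Nonempty G₁] [Nonempty G₂]
    (hCI : CI_G1_AG2_B1 p) (a' : A) (g₁ : G₁) (b₁ : B₁) (g₂ : G₂) :
    pAG1B1G2 p a' g₁ b₁ g₂ * pB1 p b₁ = pG1B1 p g₁ b₁ * pAB1G2 p a' b₁ g₂ := by
  have h := hCI g₁ a' g₂ b₁
  have hb := (pB1_pos p hpos b₁).ne'
  rw [show (∑ y : Y, p (y, a', g₁, b₁, g₂)) = pAG1B1G2 p a' g₁ b₁ g₂ from rfl] at h
  field_simp at h
  exact mul_right_cancel₀ hb (by linear_combination pB1 p b₁ * h)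

end AuxLemmas
section MainLemmas
variable (p : Y × A × G₁ × B₁ × G₂ → ℝ)
variable [Nonempty Y] [Nonempty A] [Nonempty G₁] [Nonempty B₁] [Nonempty G₂]
variable (hpos : ∀ o, 0 < p o) (hCI : CI_G1_AG2_B1 p)
include hpos hCI

/-- The IPW weight of `psiGB` coincides with `wgt`. -/
lemma wgt_eq (a : A) (g₁ : G₁) (b₁ : B₁) (g₂ : G₂) :
    pG1B1 p g₁ b₁ * pG2 p g₂ / pAG1B1G2 p a g₁ b₁ g₂ = wgt p a b₁ g₂ := by
  have hk := key_fact p hpos hCI a g₁ b₁ g₂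
  have h1 := (pAG1B1G2_pos p hpos a g₁ b₁ g₂).ne'
  have h2 := (pAB1G2_pos p hpos a b₁ g₂).ne'
  have h3 := (pB1_pos p hpos b₁).ne'
  rw [wgt, div_eq_div_iff h1 h2]
  linear_combination (-1 : ℝ) * pG2 p g₂ * hk

/-- `p(a,g₁,b₁,g₂) · wgt = p(g₁,b₁) · p(g₂)`. -/
lemma weight_cancel (a : A) (g₁ : G₁) (b₁ : B₁) (g₂ : G₂) :
    pAG1B1G2 p a g₁ b₁ g₂ * wgt p a b₁ g₂ = pG1B1 p g₁ b₁ * pG2 p g₂ := by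
  have hk := key_fact p hpos hCI a g₁ b₁ g₂
  have h2 := (pAB1G2_pos p hpos a b₁ g₂).ne'
  have h3 := (pB1_pos p hpos b₁).ne'
  rw [wgt]
  field_simp
  linear_combination pG2 p g₂ * hk

/-- Collapse of the regression `mGB` to `mB`. -/
lemma reg_collapse (a : A) (b₁ : B₁) (g₂ : G₂) :
    ∑ g₁ : G₁, pG1B1 p g₁ b₁ * mGB p a g₁ b₁ g₂ = pB1 p b₁ * mB p a b₁ g₂ := by
  have step : ∀ g₁ : G₁, pG1B1 p g₁ b₁ * mGB p a g₁ b₁ g₂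
      = ∑ y : Y, (y : ℝ) * (pB1 p b₁ * (p (y, a, g₁, b₁, g₂) / pAB1G2 p a b₁ g₂)) := by
    intro g₁
    rw [mGB, Finset.mul_sum]
    refine Finset.sum_congr rfl fun y _ => ?_
    have hk := key_fact p hpos hCI a g₁ b₁ g₂
    have h1 := (pAG1B1G2_pos p hpos a g₁ b₁ g₂).ne'
    have h2 := (pAB1G2_pos p hpos a b₁ g₂).ne'
    field_simp
    ring_nf
    linear_combination (-1 : ℝ) * ((y : ℝ) * p (y, a, g₁, b₁, g₂)) * hk
  rw [Finset.sum_congr rfl fun g₁ _ => step g₁, Finset.sum_comm, mB, Finset.mul_sum]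
  refine Finset.sum_congr rfl fun y _ => ?_
  rw [Finset.sum_congr rfl fun g₁ (_ : g₁ ∈ Finset.univ) =>
      show (y : ℝ) * (pB1 p b₁ * (p (y, a, g₁, b₁, g₂) / pAB1G2 p a b₁ g₂))
        = pB1 p b₁ * (y : ℝ) / pAB1G2 p a b₁ g₂ * p (y, a, g₁, b₁, g₂) from by ring,
    ← Finset.mul_sum]
  ring

/-- `∑_{g₁} p(g₁,b₁)·dd = 0`. -/
lemma dd_collapse (a : A) (b₁ : B₁) (g₂ : G₂) :
    ∑ g₁ : G₁, pG1B1 p g₁ b₁ * dd p a g₁ b₁ g₂ = 0 := by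
  simp only [dd, mul_sub, Finset.sum_sub_distrib]
  rw [reg_collapse p hpos hCI, ← Finset.sum_mul, marg_G1B1, sub_self]

/-- `∑_{g₁} p(g₁,b₁)·DD = 0`. -/
lemma DD_collapse (a : A) (b₁ : B₁) :
    ∑ g₁ : G₁, pG1B1 p g₁ b₁ * DD p a g₁ b₁ = 0 := by
  simp only [DD, Finset.mul_sum]
  rw [Finset.sum_comm]
  rw [Finset.sum_congr rfl fun g₂ _ => ?_]
  · exact Finset.sum_const_zero
  rw [Finset.sum_congr rfl fun g₁ _ =>
    show pG1B1 p g₁ b₁ * (pG2 p g₂ * dd p a g₁ b₁ g₂)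
      = pG2 p g₂ * (pG1B1 p g₁ b₁ * dd p a g₁ b₁ g₂) by ring]
  rw [← Finset.mul_sum, dd_collapse p hpos hCI, mul_zero]

/-- `∑_{g₁} p(g₁,b₁,g₂)·DD = 0`. -/
lemma DD_collapse' (a : A) (b₁ : B₁) (g₂ : G₂) :
    ∑ g₁ : G₁, pG1B1G2 p g₁ b₁ g₂ * DD p a g₁ b₁ = 0 := by
  have h3 := (pB1_pos p hpos b₁).ne'
  apply mul_left_cancel₀ h3
  rw [mul_zero, Finset.mul_sum]
  have hfac : ∀ g₁ : G₁, pB1 p b₁ * (pG1B1G2 p g₁ b₁ g₂ * DD p a g₁ b₁)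
      = (∑ a' : A, pAB1G2 p a' b₁ g₂) * (pG1B1 p g₁ b₁ * DD p a g₁ b₁) := by
    intro g₁
    have : pG1B1G2 p g₁ b₁ g₂ * pB1 p b₁ = pG1B1 p g₁ b₁ * ∑ a' : A, pAB1G2 p a' b₁ g₂ := by
      rw [pG1B1G2, Finset.sum_mul, Finset.mul_sum]
      exact Finset.sum_congr rfl fun a' _ => key_fact p hpos hCI a' g₁ b₁ g₂
    linear_combination DD p a g₁ b₁ * this
  rw [Finset.sum_congr rfl fun g₁ _ => hfac g₁, ← Finset.mul_sum,
    DD_collapse p hpos hCI, mul_zero]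

/-- `T_GB = T_B`. -/
lemma TGB_eq_TB (a : A) : TGB p a = TB p a := by
  rw [TGB, TB]
  rw [Finset.sum_congr rfl fun g₁ _ => Finset.sum_congr rfl fun b₁ _ =>
    show pG1B1 p g₁ b₁ * ∑ g₂ : G₂, pG2 p g₂ * mGB p a g₁ b₁ g₂
      = ∑ g₂ : G₂, pG2 p g₂ * (pG1B1 p g₁ b₁ * mGB p a g₁ b₁ g₂) by
        rw [Finset.mul_sum]; exact Finset.sum_congr rfl fun _ _ => by ring]
  rw [sum_rot3]
  refine Finset.sum_congr rfl fun b₁ _ => ?_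
  rw [Finset.mul_sum]
  refine Finset.sum_congr rfl fun g₂ _ => ?_
  rw [← Finset.mul_sum, reg_collapse p hpos hCI]
  ring

/-- second correction terms agree. -/
lemma corr_eq (a : A) (g₂ : G₂) :
    ∑ g₁' : G₁, ∑ b₁' : B₁, pG1B1 p g₁' b₁' * mGB p a g₁' b₁' g₂
      = ∑ b₁' : B₁, pB1 p b₁' * mB p a b₁' g₂ := by
  rw [Finset.sum_comm]
  exact Finset.sum_congr rfl fun b₁' _ => reg_collapse p hpos hCI a b₁' g₂

omit hCI

/-- zero conditional mean of the residual. -/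
lemma zero_resid (a : A) (g₁ : G₁) (b₁ : B₁) (g₂ : G₂) :
    ∑ y : Y, p (y, a, g₁, b₁, g₂) * ((y : ℝ) - mGB p a g₁ b₁ g₂) = 0 := by
  have h1 := (pAG1B1G2_pos p hpos a g₁ b₁ g₂).ne'
  have hm : mGB p a g₁ b₁ g₂ * pAG1B1G2 p a g₁ b₁ g₂ = ∑ y : Y, (y : ℝ) * p (y, a, g₁, b₁, g₂) := by
    rw [mGB, Finset.sum_mul]
    exact Finset.sum_congr rfl fun y _ => by field_simp
  simp only [mul_sub, Finset.sum_sub_distrib, ← Finset.sum_mul]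
  rw [show (∑ y : Y, p (y, a, g₁, b₁, g₂)) = pAG1B1G2 p a g₁ b₁ g₂ from rfl]
  rw [Finset.sum_congr rfl fun y (_ : y ∈ Finset.univ) =>
    mul_comm (p (y, a, g₁, b₁, g₂)) (y : ℝ)]
  linear_combination -hm

end MainLemmas
section PointwiseDefs
variable (p : Y × A × G₁ × B₁ × G₂ → ℝ)

/-- `G₂`-average of `mGB`. -/
def cc (a : A) (g₁ : G₁) (b₁ : B₁) : ℝ := ∑ g₂' : G₂, pG2 p g₂' * mGB p a g₁ b₁ g₂'

/-- `(G₁,B₁)`-average of `mB` minus twice the target. -/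
def ee (a : A) (g₂ : G₂) : ℝ := (∑ b₁' : B₁, pB1 p b₁' * mB p a b₁' g₂) - 2 * TB p a

/-- Expansion of a sum over observations into iterated sums with `y` innermost. -/
lemma sum_obs (f : Y × A × G₁ × B₁ × G₂ → ℝ) :
    ∑ o : Y × A × G₁ × B₁ × G₂, f o
      = ∑ a' : A, ∑ g₁ : G₁, ∑ b₁ : B₁, ∑ g₂ : G₂, ∑ y : Y, f (y, a', g₁, b₁, g₂) := by
  simp only [Fintype.sum_prod_type]
  exact sum_rot5 _

end PointwiseDefs

section Pointwise
variable (p : Y × A × G₁ × B₁ × G₂ → ℝ)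
variable [Nonempty Y] [Nonempty A] [Nonempty G₁] [Nonempty B₁] [Nonempty G₂]
variable (hpos : ∀ o, 0 < p o) (hCI : CI_G1_AG2_B1 p)
include hpos hCI

lemma psiGB_eq (a : A) (y : Y) (a' : A) (g₁ : G₁) (b₁ : B₁) (g₂ : G₂) :
    psiGB p a y a' g₁ b₁ g₂
      = (if a' = a then (1 : ℝ) else 0) * wgt p a b₁ g₂ * ((y : ℝ) - mGB p a g₁ b₁ g₂)
        + (cc p a g₁ b₁ + ee p a g₂) := by
  rw [psiGB, wgt_eq p hpos hCI, corr_eq p hpos hCI, TGB_eq_TB p hpos hCI, cc, ee]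
  ring

lemma diff_eq (a : A) (y : Y) (a' : A) (g₁ : G₁) (b₁ : B₁) (g₂ : G₂) :
    psiB p a y a' b₁ g₂ - psiGB p a y a' g₁ b₁ g₂
      = (if a' = a then (1 : ℝ) else 0) * wgt p a b₁ g₂ * dd p a g₁ b₁ g₂
        - DD p a g₁ b₁ := by
  rw [psiB, psiGB, wgt_eq p hpos hCI, corr_eq p hpos hCI, TGB_eq_TB p hpos hCI]
  simp only [DD, dd, mul_sub, Finset.sum_sub_distrib, wgt]
  ring

/-- `E[ψ_B - ψ_GB] = 0`. -/
lemma exp_diff_zero (a : A) :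
    ∑ o : Y × A × G₁ × B₁ × G₂,
      p o * (psiB p a o.1 o.2.1 o.2.2.2.1 o.2.2.2.2
        - psiGB p a o.1 o.2.1 o.2.2.1 o.2.2.2.1 o.2.2.2.2) = 0 := by
  rw [sum_obs]
  have inner : ∀ (a' : A) (g₁ : G₁) (b₁ : B₁) (g₂ : G₂),
      (∑ y : Y, p (y, a', g₁, b₁, g₂) *
        (psiB p a y a' b₁ g₂ - psiGB p a y a' g₁ b₁ g₂))
      = (if a' = a then (1 : ℝ) else 0) *
          (pAG1B1G2 p a' g₁ b₁ g₂ * wgt p a b₁ g₂ * dd p a g₁ b₁ g₂)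
        - pAG1B1G2 p a' g₁ b₁ g₂ * DD p a g₁ b₁ := by
    intro a' g₁ b₁ g₂
    rw [Finset.sum_congr rfl fun y _ => by
      rw [diff_eq p hpos hCI a y a' g₁ b₁ g₂], ← Finset.sum_mul]
    rw [show (∑ y : Y, p (y, a', g₁, b₁, g₂)) = pAG1B1G2 p a' g₁ b₁ g₂ from rfl]
    ring
  rw [Finset.sum_congr rfl fun a' _ => Finset.sum_congr rfl fun g₁ _ =>
    Finset.sum_congr rfl fun b₁ _ => Finset.sum_congr rfl fun g₂ _ => inner a' g₁ b₁ g₂]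
  simp only [Finset.sum_sub_distrib]
  have SA : ∑ a' : A, ∑ g₁ : G₁, ∑ b₁ : B₁, ∑ g₂ : G₂,
      (if a' = a then (1 : ℝ) else 0) *
        (pAG1B1G2 p a' g₁ b₁ g₂ * wgt p a b₁ g₂ * dd p a g₁ b₁ g₂) = 0 := by
    simp only [← Finset.mul_sum]
    simp only [ite_mul, one_mul, zero_mul]
    rw [Finset.sum_ite_eq' Finset.univ a]
    simp only [Finset.mem_univ, if_true]
    rw [Finset.sum_congr rfl fun g₁ _ => Finset.sum_congr rfl fun b₁ _ =>
      Finset.sum_congr rfl fun g₂ _ => by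
        rw [weight_cancel p hpos hCI a g₁ b₁ g₂]]
    rw [sum_rot3]
    refine Finset.sum_eq_zero fun b₁ _ => Finset.sum_eq_zero fun g₂ _ => ?_
    rw [Finset.sum_congr rfl fun g₁ (_ : g₁ ∈ Finset.univ) =>
      show pG1B1 p g₁ b₁ * pG2 p g₂ * dd p a g₁ b₁ g₂
        = pG2 p g₂ * (pG1B1 p g₁ b₁ * dd p a g₁ b₁ g₂) from by ring, ← Finset.mul_sum,
      dd_collapse p hpos hCI, mul_zero]
  have SB : ∑ a' : A, ∑ g₁ : G₁, ∑ b₁ : B₁, ∑ g₂ : G₂,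
      pAG1B1G2 p a' g₁ b₁ g₂ * DD p a g₁ b₁ = 0 := by
    rw [sum_rot4]
    rw [Finset.sum_congr rfl fun g₁ _ => Finset.sum_congr rfl fun b₁ _ =>
      Finset.sum_congr rfl fun g₂ (_ : g₂ ∈ Finset.univ) =>
        show (∑ a' : A, pAG1B1G2 p a' g₁ b₁ g₂ * DD p a g₁ b₁)
          = pG1B1G2 p g₁ b₁ g₂ * DD p a g₁ b₁ from by rw [← Finset.sum_mul]; rfl]
    rw [sum_rot3]
    exact Finset.sum_eq_zero fun b₁ _ => Finset.sum_eq_zero fun g₂ _ =>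
      DD_collapse' p hpos hCI a b₁ g₂
  rw [SA, SB, sub_zero]

end Pointwise

section ProdZero
variable (p : Y × A × G₁ × B₁ × G₂ → ℝ)
variable [Nonempty Y] [Nonempty A] [Nonempty G₁] [Nonempty B₁] [Nonempty G₂]
variable (hpos : ∀ o, 0 < p o) (hCI : CI_G1_AG2_B1 p)
include hpos hCI

/-- `E[ψ_GB · (ψ_B - ψ_GB)] = 0`. -/
lemma exp_prod_zero (a : A) :
    ∑ o : Y × A × G₁ × B₁ × G₂,
      p o * (psiGB p a o.1 o.2.1 o.2.2.1 o.2.2.2.1 o.2.2.2.2 *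
        (psiB p a o.1 o.2.1 o.2.2.2.1 o.2.2.2.2
          - psiGB p a o.1 o.2.1 o.2.2.1 o.2.2.2.1 o.2.2.2.2)) = 0 := by
  rw [sum_obs]
  have inner : ∀ (a' : A) (g₁ : G₁) (b₁ : B₁) (g₂ : G₂),
      (∑ y : Y, p (y, a', g₁, b₁, g₂) * (psiGB p a y a' g₁ b₁ g₂ *
        (psiB p a y a' b₁ g₂ - psiGB p a y a' g₁ b₁ g₂)))
      = (if a' = a then (1 : ℝ) else 0) *
          (pAG1B1G2 p a' g₁ b₁ g₂ * wgt p a b₁ g₂ *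
            ((cc p a g₁ b₁ + ee p a g₂) * dd p a g₁ b₁ g₂))
        - pAG1B1G2 p a' g₁ b₁ g₂ * ((cc p a g₁ b₁ + ee p a g₂) * DD p a g₁ b₁) := by
    intro a' g₁ b₁ g₂
    have expand : ∀ y : Y,
        p (y, a', g₁, b₁, g₂) * (psiGB p a y a' g₁ b₁ g₂ *
          (psiB p a y a' b₁ g₂ - psiGB p a y a' g₁ b₁ g₂))
        = ((if a' = a then (1 : ℝ) else 0) *
              ((if a' = a then (1 : ℝ) else 0) * wgt p a b₁ g₂ ^ 2 * dd p a g₁ b₁ g₂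
                - wgt p a b₁ g₂ * DD p a g₁ b₁))
            * (p (y, a', g₁, b₁, g₂) * ((y : ℝ) - mGB p a g₁ b₁ g₂))
          + ((cc p a g₁ b₁ + ee p a g₂) *
              ((if a' = a then (1 : ℝ) else 0) * wgt p a b₁ g₂ * dd p a g₁ b₁ g₂
                - DD p a g₁ b₁))
            * p (y, a', g₁, b₁, g₂) := by
      intro y
      rw [diff_eq p hpos hCI, psiGB_eq p hpos hCI]
      ring
    rw [Finset.sum_congr rfl fun y _ => expand y, Finset.sum_add_distrib,
      ← Finset.mul_sum, ← Finset.mul_sum]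
    have hz : ∀ C : ℝ, ((if a' = a then (1 : ℝ) else 0) * C) *
        (∑ y : Y, p (y, a', g₁, b₁, g₂) * ((y : ℝ) - mGB p a g₁ b₁ g₂)) = 0 := by
      intro C
      by_cases h : a' = a
      · rw [h, zero_resid p hpos a g₁ b₁ g₂, mul_zero]
      · simp [h]
    rw [hz, zero_add,
      show (∑ y : Y, p (y, a', g₁, b₁, g₂)) = pAG1B1G2 p a' g₁ b₁ g₂ from rfl]
    ring
  rw [Finset.sum_congr rfl fun a' _ => Finset.sum_congr rfl fun g₁ _ =>
    Finset.sum_congr rfl fun b₁ _ => Finset.sum_congr rfl fun g₂ _ => inner a' g₁ b₁ g₂]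
  simp only [Finset.sum_sub_distrib]
  have SA : ∑ a' : A, ∑ g₁ : G₁, ∑ b₁ : B₁, ∑ g₂ : G₂,
      (if a' = a then (1 : ℝ) else 0) *
        (pAG1B1G2 p a' g₁ b₁ g₂ * wgt p a b₁ g₂ *
          ((cc p a g₁ b₁ + ee p a g₂) * dd p a g₁ b₁ g₂))
      = ∑ g₁ : G₁, ∑ b₁ : B₁, pG1B1 p g₁ b₁ * (cc p a g₁ b₁ * DD p a g₁ b₁) := by
    simp only [← Finset.mul_sum]
    simp only [ite_mul, one_mul, zero_mul]
    rw [Finset.sum_ite_eq' Finset.univ a]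
    simp only [Finset.mem_univ, if_true]
    rw [Finset.sum_congr rfl fun g₁ _ => Finset.sum_congr rfl fun b₁ _ =>
      Finset.sum_congr rfl fun g₂ (_ : g₂ ∈ Finset.univ) => by
        rw [weight_cancel p hpos hCI a g₁ b₁ g₂]]
    rw [Finset.sum_congr rfl fun g₁ _ => Finset.sum_congr rfl fun b₁ _ =>
      Finset.sum_congr rfl fun g₂ (_ : g₂ ∈ Finset.univ) =>
        show pG1B1 p g₁ b₁ * pG2 p g₂ * ((cc p a g₁ b₁ + ee p a g₂) * dd p a g₁ b₁ g₂)
          = (pG1B1 p g₁ b₁ * cc p a g₁ b₁) * (pG2 p g₂ * dd p a g₁ b₁ g₂)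
            + (pG2 p g₂ * ee p a g₂) * (pG1B1 p g₁ b₁ * dd p a g₁ b₁ g₂) from by ring]
    simp only [Finset.sum_add_distrib]
    have E2 : ∑ g₁ : G₁, ∑ b₁ : B₁, ∑ g₂ : G₂,
        (pG2 p g₂ * ee p a g₂) * (pG1B1 p g₁ b₁ * dd p a g₁ b₁ g₂) = 0 := by
      rw [sum_rot3]
      refine Finset.sum_eq_zero fun b₁ _ => Finset.sum_eq_zero fun g₂ _ => ?_
      rw [← Finset.mul_sum, dd_collapse p hpos hCI, mul_zero]
    rw [E2, add_zero]
    refine Finset.sum_congr rfl fun g₁ _ => Finset.sum_congr rfl fun b₁ _ => ?_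
    rw [← Finset.mul_sum,
      show (∑ g₂ : G₂, pG2 p g₂ * dd p a g₁ b₁ g₂) = DD p a g₁ b₁ from rfl]
    ring
  have SB : ∑ a' : A, ∑ g₁ : G₁, ∑ b₁ : B₁, ∑ g₂ : G₂,
      pAG1B1G2 p a' g₁ b₁ g₂ * ((cc p a g₁ b₁ + ee p a g₂) * DD p a g₁ b₁)
      = ∑ g₁ : G₁, ∑ b₁ : B₁, pG1B1 p g₁ b₁ * (cc p a g₁ b₁ * DD p a g₁ b₁) := by
    rw [sum_rot4]
    rw [Finset.sum_congr rfl fun g₁ _ => Finset.sum_congr rfl fun b₁ _ =>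
      Finset.sum_congr rfl fun g₂ (_ : g₂ ∈ Finset.univ) =>
        show (∑ a' : A, pAG1B1G2 p a' g₁ b₁ g₂ *
            ((cc p a g₁ b₁ + ee p a g₂) * DD p a g₁ b₁))
          = pG1B1G2 p g₁ b₁ g₂ * (cc p a g₁ b₁ * DD p a g₁ b₁)
            + ee p a g₂ * (pG1B1G2 p g₁ b₁ g₂ * DD p a g₁ b₁) from by
          rw [← Finset.sum_mul]
          rw [show (∑ a' : A, pAG1B1G2 p a' g₁ b₁ g₂) = pG1B1G2 p g₁ b₁ g₂ from rfl]
          ring]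
    simp only [Finset.sum_add_distrib]
    have F2 : ∑ g₁ : G₁, ∑ b₁ : B₁, ∑ g₂ : G₂,
        ee p a g₂ * (pG1B1G2 p g₁ b₁ g₂ * DD p a g₁ b₁) = 0 := by
      rw [sum_rot3]
      refine Finset.sum_eq_zero fun b₁ _ => Finset.sum_eq_zero fun g₂ _ => ?_
      rw [← Finset.mul_sum, DD_collapse' p hpos hCI a b₁ g₂, mul_zero]
    rw [F2, add_zero]
    refine Finset.sum_congr rfl fun g₁ _ => Finset.sum_congr rfl fun b₁ _ => ?_
    rw [← Finset.sum_mul, marg_G2_pG1B1G2]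
  rw [SA, SB, sub_self]

end ProdZero
/-- Lemma 4.3 (supplement of mediator variables), discrete form: under
`G₁ ⊥ (A, G₂) | B₁`, the variance of `ψ_a^{B₁,G₂}` decomposes as the
variance of `ψ_a^{(G₁,B₁),G₂}` plus the variance of the difference; in
particular the larger adjustment set has no larger asymptotic variance. -/
theorem variance_decomposition_supplement_mediator
    (p : Y × A × G₁ × B₁ × G₂ → ℝ)
    (hpos : ∀ o, 0 < p o) (hsum : ∑ o, p o = 1) (a : A)
    (hCI : CI_G1_AG2_B1 p) :
    (VarP p (fun o => psiB p a o.1 o.2.1 o.2.2.2.1 o.2.2.2.2) =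
      VarP p (fun o => psiGB p a o.1 o.2.1 o.2.2.1 o.2.2.2.1 o.2.2.2.2) +
        VarP p (fun o => psiB p a o.1 o.2.1 o.2.2.2.1 o.2.2.2.2 -
          psiGB p a o.1 o.2.1 o.2.2.1 o.2.2.2.1 o.2.2.2.2)) ∧
    VarP p (fun o => psiB p a o.1 o.2.1 o.2.2.2.1 o.2.2.2.2) ≥
      VarP p (fun o => psiGB p a o.1 o.2.1 o.2.2.1 o.2.2.2.1 o.2.2.2.2) := by

  have hne : Nonempty (Y × A × G₁ × B₁ × G₂) := by
    by_contra hcon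
    rw [not_nonempty_iff] at hcon
    rw [Finset.univ_eq_empty, Finset.sum_empty] at hsum
    exact one_ne_zero hsum.symm
  obtain ⟨⟨y0, a0, g10, b10, g20⟩⟩ := hne
  haveI : Nonempty Y := ⟨y0⟩
  haveI : Nonempty A := ⟨a0⟩
  haveI : Nonempty G₁ := ⟨g10⟩
  haveI : Nonempty B₁ := ⟨b10⟩
  haveI : Nonempty G₂ := ⟨g20⟩
  have horth : ∑ o : Y × A × G₁ × B₁ × G₂,
      p o * (psiGB p a o.1 o.2.1 o.2.2.1 o.2.2.2.1 o.2.2.2.2 *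
        (psiB p a o.1 o.2.1 o.2.2.2.1 o.2.2.2.2
          - psiGB p a o.1 o.2.1 o.2.2.1 o.2.2.2.1 o.2.2.2.2))
      = (∑ o : Y × A × G₁ × B₁ × G₂,
          p o * psiGB p a o.1 o.2.1 o.2.2.1 o.2.2.2.1 o.2.2.2.2) *
        (∑ o : Y × A × G₁ × B₁ × G₂,
          p o * (psiB p a o.1 o.2.1 o.2.2.2.1 o.2.2.2.2
            - psiGB p a o.1 o.2.1 o.2.2.1 o.2.2.2.1 o.2.2.2.2)) := by
    rw [exp_prod_zero p hpos hCI a, exp_diff_zero p hpos hCI a, mul_zero]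
  have hsplit : VarP p (fun o => psiB p a o.1 o.2.1 o.2.2.2.1 o.2.2.2.2) =
      VarP p (fun o => psiGB p a o.1 o.2.1 o.2.2.1 o.2.2.2.1 o.2.2.2.2) +
        VarP p (fun o => psiB p a o.1 o.2.1 o.2.2.2.1 o.2.2.2.2 -
          psiGB p a o.1 o.2.1 o.2.2.1 o.2.2.2.1 o.2.2.2.2) := by
    simp only [VarP]
    rw [show (∑ o : Y × A × G₁ × B₁ × G₂,
          p o * psiB p a o.1 o.2.1 o.2.2.2.1 o.2.2.2.2 ^ 2)
        = ∑ o : Y × A × G₁ × B₁ × G₂,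
          p o * (psiGB p a o.1 o.2.1 o.2.2.1 o.2.2.2.1 o.2.2.2.2
            + (psiB p a o.1 o.2.1 o.2.2.2.1 o.2.2.2.2
              - psiGB p a o.1 o.2.1 o.2.2.1 o.2.2.2.1 o.2.2.2.2)) ^ 2 from
        Finset.sum_congr rfl fun o _ => by ring]
    rw [show (∑ o : Y × A × G₁ × B₁ × G₂,
          p o * psiB p a o.1 o.2.1 o.2.2.2.1 o.2.2.2.2)
        = ∑ o : Y × A × G₁ × B₁ × G₂,
          p o * (psiGB p a o.1 o.2.1 o.2.2.1 o.2.2.2.1 o.2.2.2.2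
            + (psiB p a o.1 o.2.1 o.2.2.2.1 o.2.2.2.2
              - psiGB p a o.1 o.2.1 o.2.2.1 o.2.2.2.1 o.2.2.2.2)) from
        Finset.sum_congr rfl fun o _ => by ring]
    exact var_add_gen (fun o => p o) _ _ horth
  refine ⟨hsplit, ?_⟩
  have hnn : 0 ≤ VarP p (fun o => psiB p a o.1 o.2.1 o.2.2.2.1 o.2.2.2.2 -
      psiGB p a o.1 o.2.1 o.2.2.1 o.2.2.2.1 o.2.2.2.2) := by
    rw [VarP]
    exact var_nonneg_gen (fun o => p o) _ (fun o => (hpos o).le) hsum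
  rw [ge_iff_le, hsplit]
  linarith [hnn]


end
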